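/- arXiv:1205.2184 — 3 statements merged into one kernel-verified Lean document; each statement's English description precedes it below -/
import Mathlib

section
/- Let τ > 0, λ ≥ 0, t > 0, let Λ be a probability measure on [-τ, 0], and let f : [-τ, t] → [0, ∞) be continuous. Then ∫₀ᵗ e^{-λs} (∫_{-τ}^0 f(s+θ) Λ(dθ)) ds ≤ ∫_{-τ}^0 f(θ) dθ + ∫₀ᵗ e^{-λs} f(s) ds. -/
open MeasureTheory

theorem shift_estimate (τ lam t : ℝ) (hτ : 0 < τ) (hlam : 0 ≤ lam) (ht : 0 < t)
    (Λ : Measure ℝ) [IsProbabilityMeasure Λ] (hΛ : Λ (Set.Icc (-τ) 0) = 1)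
    (f : ℝ → ℝ) (hf : Continuous f) (hf0 : ∀ s, 0 ≤ f s) :
    (∫ s in Set.Icc (0:ℝ) t, Real.exp (-lam * s) * ∫ θ, f (s + θ) ∂Λ)
      ≤ (∫ θ in Set.Icc (-τ) (0:ℝ), f θ)
        + ∫ s in Set.Icc (0:ℝ) t, Real.exp (-lam * s) * f s := by
  have hτ0 : -τ ≤ (0:ℝ) := by linarith
  set K : Set ℝ := Set.Icc (-τ) 0 with hK
  set A : Set ℝ := Set.Icc (0:ℝ) t with hA
  set B : ℝ := (∫ θ in K, f θ) + ∫ s in A, Real.exp (-lam * s) * f s with hB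
  set φ : ℝ → ℝ := fun u => if u ≤ 0 then f u else Real.exp (-lam * u) * f u with hφ
  have hφ0 : ∀ u, 0 ≤ φ u := by
    intro u
    by_cases h : u ≤ 0 <;>
      simp [hφ, h, hf0 u, mul_nonneg (Real.exp_pos _).le (hf0 u)]
  have hφle : ∀ u, φ u ≤ f u := by
    intro u
    by_cases h : u ≤ 0
    · simp [hφ, h]
    · simp only [hφ, h, if_false]
      exact mul_le_of_le_one_left (hf0 u) (Real.exp_le_one_iff.2 (by nlinarith [not_le.1 h]))
  have hφm : Measurable φ :=
    Measurable.ite measurableSet_Iic hf.measurable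
      ((Real.continuous_exp.comp (continuous_const.mul continuous_id)).mul hf).measurable
  have hφint : IntegrableOn φ (Set.Icc (-τ) t) := by
    refine Integrable.mono (hf.integrableOn_Icc) hφm.aestronglyMeasurable ?_
    refine Filter.Eventually.of_forall fun u => ?_
    rw [Real.norm_eq_abs, Real.norm_eq_abs, abs_of_nonneg (hφ0 u), abs_of_nonneg (hf0 u)]
    exact hφle u
  -- Λ is concentrated on K
  have hKc : Λ Kᶜ = 0 := by
    have h1 : Λ Kᶜ = Λ Set.univ - Λ K :=
      measure_compl (measurableSet_Icc : MeasurableSet K) (measure_ne_top Λ K)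
    rw [h1, measure_univ, hΛ, tsub_self]
  -- key pointwise estimate
  have key : ∀ θ ∈ K, (∫ s in A, Real.exp (-lam * s) * f (s + θ)) ≤ B := by
    intro θ hθ
    obtain ⟨hθ1, hθ2⟩ := hθ
    have hsub : (∫ s in A, Real.exp (-lam * s) * f (s + θ))
        = ∫ u in Set.Icc θ (t + θ), Real.exp (-lam * (u - θ)) * f u := by
      rw [hA, MeasureTheory.integral_Icc_eq_integral_Ioc,
        MeasureTheory.integral_Icc_eq_integral_Ioc,
        ← intervalIntegral.integral_of_le ht.le,
        ← intervalIntegral.integral_of_le (by linarith : θ ≤ t + θ)]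
      have h := intervalIntegral.integral_comp_add_right (a := (0:ℝ)) (b := t)
        (fun u => Real.exp (-lam * (u - θ)) * f u) θ
      simp only [zero_add] at h
      rw [← h]
      refine intervalIntegral.integral_congr fun s _ => ?_
      simp only [add_sub_cancel_right]
    rw [hsub]
    have hsub2 : Set.Icc θ (t + θ) ⊆ Set.Icc (-τ) t :=
      Set.Icc_subset_Icc hθ1 (by linarith)
    have step1 : (∫ u in Set.Icc θ (t + θ), Real.exp (-lam * (u - θ)) * f u)
        ≤ ∫ u in Set.Icc θ (t + θ), φ u := by
      refine setIntegral_mono_on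
        (Continuous.integrableOn_Icc (by continuity))
        (hφint.mono_set hsub2) measurableSet_Icc ?_
      intro u hu
      by_cases h : u ≤ 0
      · simp only [hφ, h, if_true]
        exact mul_le_of_le_one_left (hf0 u)
          (Real.exp_le_one_iff.2 (by nlinarith [hu.1]))
      · simp only [hφ, h, if_false]
        exact mul_le_mul_of_nonneg_right (Real.exp_le_exp.2 (by nlinarith)) (hf0 u)
    have step2 : (∫ u in Set.Icc θ (t + θ), φ u) ≤ ∫ u in Set.Icc (-τ) t, φ u := by
      refine setIntegral_mono_set hφint
        (Filter.Eventually.of_forall hφ0) (HasSubset.Subset.eventuallyLE hsub2)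
    have hdisj : Disjoint K (Set.Ioc (0:ℝ) t) :=
      Set.disjoint_left.2 fun u hu hu' => absurd hu'.1 (not_lt.2 hu.2)
    have hKsub : K ⊆ Set.Icc (-τ) t := Set.Icc_subset_Icc le_rfl ht.le
    have hIsub : Set.Ioc (0:ℝ) t ⊆ Set.Icc (-τ) t := fun u hu =>
      ⟨by linarith [hu.1], hu.2⟩
    have step3 : (∫ u in Set.Icc (-τ) t, φ u)
        = (∫ u in K, φ u) + ∫ u in Set.Ioc (0:ℝ) t, φ u := by
      rw [← Set.Icc_union_Ioc_eq_Icc hτ0 ht.le]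
      exact setIntegral_union hdisj measurableSet_Ioc
        (hφint.mono_set hKsub) (hφint.mono_set hIsub)
    have e1 : (∫ u in K, φ u) = ∫ u in K, f u :=
      setIntegral_congr_fun measurableSet_Icc fun u hu => by simp [hφ, hu.2]
    have e2 : (∫ u in Set.Ioc (0:ℝ) t, φ u)
        = ∫ u in Set.Ioc (0:ℝ) t, Real.exp (-lam * u) * f u :=
      setIntegral_congr_fun measurableSet_Ioc fun u hu => by
        simp [hφ, not_le.2 hu.1]
    have e3 : (∫ s in A, Real.exp (-lam * s) * f s)
        = ∫ u in Set.Ioc (0:ℝ) t, Real.exp (-lam * u) * f u := by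
      rw [hA, MeasureTheory.integral_Icc_eq_integral_Ioc]
    rw [hB, e3]
    linarith [step1, step2, step3, e1.le, e2.le, e1.ge, e2.ge]
  -- finiteness and boundedness for Fubini
  haveI : IsFiniteMeasure (volume.restrict A) :=
    ⟨by rw [Measure.restrict_apply_univ]; exact measure_Icc_lt_top⟩
  obtain ⟨x₀, hx₀, hx₀max⟩ :=
    (isCompact_Icc : IsCompact (Set.Icc (-τ) t)).exists_isMaxOn
      ⟨0, by constructor <;> linarith⟩ hf.continuousOn
  have hg_cont : Continuous (Function.uncurry fun s θ : ℝ =>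
      Real.exp (-lam * s) * f (s + θ)) := by
    apply Continuous.mul
    · exact Real.continuous_exp.comp (continuous_const.mul continuous_fst)
    · exact hf.comp (continuous_fst.add continuous_snd)
  have hAK : ((volume.restrict A).prod Λ) ((A ×ˢ K)ᶜ) = 0 := by
    have h1 : ((volume.restrict A).prod Λ) (Aᶜ ×ˢ (Set.univ : Set ℝ)) = 0 := by
      rw [Measure.prod_prod, Measure.restrict_apply (measurableSet_Icc.compl)]
      simp [hA]
    have h2 : ((volume.restrict A).prod Λ) ((Set.univ : Set ℝ) ×ˢ Kᶜ) = 0 := by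
      rw [Measure.prod_prod, hKc, mul_zero]
    have hsub : (A ×ˢ K)ᶜ ⊆ (Aᶜ ×ˢ (Set.univ : Set ℝ)) ∪ ((Set.univ : Set ℝ) ×ˢ Kᶜ) := by
      intro p hp
      by_cases h : p.1 ∈ A
      · right; exact ⟨trivial, fun hk => hp ⟨h, hk⟩⟩
      · left; exact ⟨h, trivial⟩
    exact measure_mono_null hsub (measure_union_null h1 h2)
  have hmem : ∀ᵐ p ∂((volume.restrict A).prod Λ), p ∈ A ×ˢ K := by
    have he : {p : ℝ × ℝ | ¬ p ∈ A ×ˢ K} = (A ×ˢ K)ᶜ := rfl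
    rw [MeasureTheory.ae_iff, he]
    exact hAK
  have hint : Integrable (Function.uncurry fun s θ : ℝ =>
      Real.exp (-lam * s) * f (s + θ)) ((volume.restrict A).prod Λ) := by
    refine Integrable.mono' (integrable_const (f x₀)) hg_cont.aestronglyMeasurable ?_
    filter_upwards [hmem] with p hp
    have hps : p.1 + p.2 ∈ Set.Icc (-τ) t := by
      constructor
      · linarith [hp.1.1, hp.2.1]
      · linarith [hp.1.2, hp.2.2]
    have hb : Real.exp (-lam * p.1) * f (p.1 + p.2) ≤ 1 * f x₀ := by
      refine mul_le_mul (Real.exp_le_one_iff.2 (by nlinarith [hp.1.1]))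
        (hx₀max hps) (hf0 _) zero_le_one
    rw [Function.uncurry, Real.norm_eq_abs,
      abs_of_nonneg (mul_nonneg (Real.exp_pos _).le (hf0 _))]
    simpa using hb
  have hswap : (∫ s in A, Real.exp (-lam * s) * ∫ θ, f (s + θ) ∂Λ)
      = ∫ θ, (∫ s in A, Real.exp (-lam * s) * f (s + θ)) ∂Λ := by
    have h : ∀ s : ℝ, Real.exp (-lam * s) * ∫ θ, f (s + θ) ∂Λ
        = ∫ θ, Real.exp (-lam * s) * f (s + θ) ∂Λ := fun s =>
      (integral_const_mul _ _).symm
    simp_rw [h]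
    exact integral_integral_swap hint
  have hmargin : Integrable (fun θ => ∫ s in A, Real.exp (-lam * s) * f (s + θ)) Λ :=
    hint.integral_prod_right
  have haeK : ∀ᵐ θ ∂Λ, θ ∈ K := by
    rw [MeasureTheory.ae_iff]; exact hKc
  calc (∫ s in A, Real.exp (-lam * s) * ∫ θ, f (s + θ) ∂Λ)
      = ∫ θ, (∫ s in A, Real.exp (-lam * s) * f (s + θ)) ∂Λ := hswap
    _ ≤ ∫ _θ, B ∂Λ := integral_mono_ae hmargin (integrable_const B)
        (haeK.mono fun θ hθ => key θ hθ)
    _ = B := by simp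
end

section
/- Let τ > 0, k ∈ [0,1), and let G : C([-τ,0]; ℝ^d) → ℝ^d satisfy |G(ξ) - G(η)| ≤ k ρ₂(ξ, η), where ρ₂(ξ,η)² = (1/τ)∫_{-τ}^0 |ξ(θ)-η(θ)|² dθ. Let x, y : [-τ, t] → ℝ^d be continuous, λ ≥ 0, and M(s) = (x(s)-y(s)) + (G(y_s) - G(x_s)) with x_s(θ) = x(s+θ). Then ∫₀ᵗ e^{-λs} |M(s)|² ds ≤ (1+k)² ∫₀ᵗ e^{-λs} |x(s)-y(s)|² ds + (1+k)k τ ρ₂(x₀, y₀)². -/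
open MeasureTheory

noncomputable def rho2 {d : ℕ} (τ : ℝ) (ξ η : C(Set.Icc (-τ) (0:ℝ), EuclideanSpace ℝ (Fin d))) : ℝ :=
  Real.sqrt ((1 / τ) * ∫ θ : Set.Icc (-τ) (0:ℝ), ‖ξ θ - η θ‖ ^ 2 ∂(MeasureTheory.volume.comap Subtype.val))

noncomputable def pathSegment {d : ℕ} (τ : ℝ) (x : ℝ → EuclideanSpace ℝ (Fin d)) (hx : Continuous x)
    (s : ℝ) : C(Set.Icc (-τ) (0:ℝ), EuclideanSpace ℝ (Fin d)) :=
  ContinuousMap.mk (fun θ : Set.Icc (-τ) (0:ℝ) => x (s + θ))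
    (hx.comp (continuous_const.add continuous_subtype_val))

lemma rho2_sq {d : ℕ} (τ : ℝ) (hτ : 0 < τ) (x y : ℝ → EuclideanSpace ℝ (Fin d))
    (hx : Continuous x) (hy : Continuous y) (s : ℝ) :
    (rho2 τ (pathSegment τ x hx s) (pathSegment τ y hy s)) ^ 2
      = (1 / τ) * ∫ u in (s - τ)..s, ‖x u - y u‖ ^ 2 := by
  have h1 : (∫ θ : Set.Icc (-τ) (0:ℝ), ‖(pathSegment τ x hx s) θ - (pathSegment τ y hy s) θ‖ ^ 2
        ∂(MeasureTheory.volume.comap Subtype.val))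
      = ∫ θ in Set.Icc (-τ) (0:ℝ), ‖x (s + θ) - y (s + θ)‖ ^ 2 := by
    exact integral_subtype_comap measurableSet_Icc (fun u : ℝ => ‖x (s + u) - y (s + u)‖ ^ 2)
  have h2 : (∫ θ in Set.Icc (-τ) (0:ℝ), ‖x (s + θ) - y (s + θ)‖ ^ 2)
      = ∫ θ in (-τ)..(0:ℝ), ‖x (s + θ) - y (s + θ)‖ ^ 2 := by
    rw [intervalIntegral.integral_of_le (by linarith), ← integral_Icc_eq_integral_Ioc]
  have h3 : (∫ θ in (-τ)..(0:ℝ), ‖x (s + θ) - y (s + θ)‖ ^ 2)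
      = ∫ u in (s - τ)..s, ‖x u - y u‖ ^ 2 := by
    rw [intervalIntegral.integral_comp_add_left (fun u => ‖x u - y u‖ ^ 2) s]
    norm_num [sub_eq_add_neg]
  rw [rho2, Real.sq_sqrt, h1, h2, h3]
  rw [h1, h2]
  have : 0 ≤ ∫ θ in (-τ)..(0:ℝ), ‖x (s + θ) - y (s + θ)‖ ^ 2 :=
    intervalIntegral.integral_nonneg (by linarith) (fun u _ => by positivity)
  positivity

lemma shift_est (τ lam t : ℝ) (f : ℝ → ℝ) (hf : Continuous f) (hf0 : ∀ u, 0 ≤ f u)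
    (hτ : 0 < τ) (hlam : 0 ≤ lam) (ht : 0 < t) :
    (∫ s in (0:ℝ)..t, ∫ u in (s - τ)..s, Real.exp (-lam * max u 0) * f u)
      ≤ τ * ((∫ u in (-τ)..(0:ℝ), f u) + ∫ u in (0:ℝ)..t, Real.exp (-lam * u) * f u) := by
  set h : ℝ → ℝ := fun u => Real.exp (-lam * max u 0) * f u with hh
  have h_cont : Continuous h :=
    (Real.continuous_exp.comp (continuous_const.mul (continuous_id.max continuous_const))).mul hf
  have h_nn : ∀ u, 0 ≤ h u := fun u => mul_nonneg (Real.exp_nonneg _) (hf0 u)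
  have hint : ∀ a b : ℝ, IntervalIntegrable h volume a b := fun a b =>
    h_cont.intervalIntegrable a b
  set Φ : ℝ → ℝ := fun s => ∫ u in (-τ)..s, h u with hΦ
  have hΦ_cont : Continuous Φ := intervalIntegral.continuous_primitive hint (-τ)
  have hΦ_mono : Monotone Φ := fun a b hab => by
    have h1 := intervalIntegral.integral_add_adjacent_intervals (hint (-τ) a) (hint a b)
    have h2 : 0 ≤ ∫ u in a..b, h u :=
      intervalIntegral.integral_nonneg hab (fun u _ => h_nn u)
    simp only [hΦ]; linarith
  have hΦ_nn : ∀ s, -τ ≤ s → 0 ≤ Φ s := fun s hs =>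
    intervalIntegral.integral_nonneg hs (fun u _ => h_nn u)
  have hH : ∀ s : ℝ, (∫ u in (s - τ)..s, h u) = Φ s - Φ (s - τ) := by
    intro s
    have := intervalIntegral.integral_add_adjacent_intervals
      (hint (-τ) (s - τ)) (hint (s - τ) s)
    simp only [hΦ]; linarith
  have key : (∫ s in (0:ℝ)..t, ∫ u in (s - τ)..s, h u) ≤ τ * Φ t := by
    have hcongr : (∫ s in (0:ℝ)..t, ∫ u in (s - τ)..s, h u)
        = (∫ s in (0:ℝ)..t, Φ s) - ∫ s in (0:ℝ)..t, Φ (s - τ) := by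
      have c1 : (∫ s in (0:ℝ)..t, ∫ u in (s - τ)..s, h u)
          = ∫ s in (0:ℝ)..t, (Φ s - Φ (s - τ)) :=
        intervalIntegral.integral_congr (fun s _ => hH s)
      rw [c1]
      exact intervalIntegral.integral_sub (hΦ_cont.intervalIntegrable 0 t)
        ((hΦ_cont.comp (by fun_prop)).intervalIntegrable 0 t)
    have hshift : (∫ s in (0:ℝ)..t, Φ (s - τ)) = ∫ s in (0 - τ)..(t - τ), Φ s :=
      intervalIntegral.integral_comp_sub_right Φ τ
    have hΦint : ∀ a b : ℝ, IntervalIntegrable Φ volume a b := fun a b =>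
      hΦ_cont.intervalIntegrable a b
    have split1 := intervalIntegral.integral_add_adjacent_intervals
      (hΦint 0 (t - τ)) (hΦint (t - τ) t)
    have split2 := intervalIntegral.integral_add_adjacent_intervals
      (hΦint (-τ) 0) (hΦint 0 (t - τ))
    have hub : (∫ s in (t - τ)..t, Φ s) ≤ τ * Φ t := by
      have : (∫ s in (t - τ)..t, Φ s) ≤ ∫ s in (t - τ)..t, Φ t := by
        apply intervalIntegral.integral_mono_on (by linarith)
          (hΦint _ _) (intervalIntegrable_const)
        intro u hu; exact hΦ_mono hu.2
      rw [intervalIntegral.integral_const] at this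
      calc (∫ s in (t - τ)..t, Φ s) ≤ (t - (t - τ)) • Φ t := this
        _ = τ * Φ t := by rw [smul_eq_mul]; ring
    have hlb : 0 ≤ ∫ s in (-τ)..(0:ℝ), Φ s :=
      intervalIntegral.integral_nonneg (by linarith) (fun u hu => hΦ_nn u hu.1)
    have h0t : (0:ℝ) - τ = -τ := by ring
    rw [hcongr, hshift, h0t]
    linarith
  have hΦt : Φ t = (∫ u in (-τ)..(0:ℝ), f u) + ∫ u in (0:ℝ)..t, Real.exp (-lam * u) * f u := by
    have e1 : (∫ u in (-τ)..(0:ℝ), h u) = ∫ u in (-τ)..(0:ℝ), f u := by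
      apply intervalIntegral.integral_congr
      intro u hu
      rw [Set.uIcc_of_le (by linarith : -τ ≤ (0:ℝ))] at hu
      simp [hh, max_eq_right hu.2]
    have e2 : (∫ u in (0:ℝ)..t, h u) = ∫ u in (0:ℝ)..t, Real.exp (-lam * u) * f u := by
      apply intervalIntegral.integral_congr
      intro u hu
      rw [Set.uIcc_of_le ht.le] at hu
      simp [hh, max_eq_left hu.1]
    have := intervalIntegral.integral_add_adjacent_intervals (hint (-τ) 0) (hint 0 t)
    simp only [hΦ]
    rw [← this, e1, e2]
  rw [← hΦt]; exact key

theorem lemma30_2 (τ lam t : ℝ) (hτ : 0 < τ) (hlam : 0 ≤ lam) (ht : 0 < t) (d : ℕ)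
    (k : ℝ) (hk0 : 0 ≤ k) (hk1 : k < 1)
    (G : C(Set.Icc (-τ) (0:ℝ), EuclideanSpace ℝ (Fin d)) → EuclideanSpace ℝ (Fin d))
    (hG : ∀ ξ η, ‖G ξ - G η‖ ≤ k * rho2 τ ξ η)
    (x y : ℝ → EuclideanSpace ℝ (Fin d)) (hx : Continuous x) (hy : Continuous y)
    (M : ℝ → EuclideanSpace ℝ (Fin d))
    (hM : ∀ s, M s = (x s - y s) + (G (pathSegment τ y hy s) - G (pathSegment τ x hx s))) :
    (∫ s in Set.Icc (0:ℝ) t, Real.exp (-lam * s) * ‖M s‖ ^ 2)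
      ≤ (1 + k) ^ 2 * (∫ s in Set.Icc (0:ℝ) t, Real.exp (-lam * s) * ‖x s - y s‖ ^ 2)
        + (1 + k) * k * τ * (rho2 τ (pathSegment τ x hx 0) (pathSegment τ y hy 0)) ^ 2 := by
  set f : ℝ → ℝ := fun u => ‖x u - y u‖ ^ 2 with hf
  have hf_cont : Continuous f := ((hx.sub hy).norm.pow 2)
  have hf0 : ∀ u, 0 ≤ f u := fun u => by positivity
  set h : ℝ → ℝ := fun u => Real.exp (-lam * max u 0) * f u with hh
  have h_cont : Continuous h :=
    (Real.continuous_exp.comp (continuous_const.mul (continuous_id.max continuous_const))).mul hf_cont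
  have hint : ∀ a b : ℝ, IntervalIntegrable h volume a b := fun a b =>
    h_cont.intervalIntegrable a b
  set Φ : ℝ → ℝ := fun s => ∫ u in (-τ)..s, h u with hΦ
  have hΦ_cont : Continuous Φ := intervalIntegral.continuous_primitive hint (-τ)
  set W : ℝ → ℝ := fun s => Φ s - Φ (s - τ) with hWdef
  have hW_cont : Continuous W := hΦ_cont.sub (hΦ_cont.comp (by fun_prop))
  have hW_eq : ∀ s : ℝ, W s = ∫ u in (s - τ)..s, h u := by
    intro s
    have := intervalIntegral.integral_add_adjacent_intervals
      (hint (-τ) (s - τ)) (hint (s - τ) s)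
    simp only [hWdef, hΦ]; linarith
  set g : ℝ → ℝ := fun s => rho2 τ (pathSegment τ x hx s) (pathSegment τ y hy s) with hgdef
  have hg_nn : ∀ s, 0 ≤ g s := fun s => Real.sqrt_nonneg _
  have hgsq : ∀ s, (g s) ^ 2 = (1 / τ) * ∫ u in (s - τ)..s, f u := fun s =>
    rho2_sq τ hτ x y hx hy s
  -- step 1 : exp weighted rho2 bound
  have step1 : ∀ s ∈ Set.Icc (0:ℝ) t, Real.exp (-lam * s) * (g s) ^ 2 ≤ (1 / τ) * W s := by
    intro s hs
    rw [hgsq s, hW_eq s]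
    have hmono : (∫ u in (s - τ)..s, Real.exp (-lam * s) * f u) ≤ ∫ u in (s - τ)..s, h u := by
      apply intervalIntegral.integral_mono_on (by linarith)
        ((continuous_const.mul hf_cont).intervalIntegrable _ _) (hint _ _)
      intro u hu
      have hmax : max u 0 ≤ s := max_le hu.2 hs.1
      have : Real.exp (-lam * s) ≤ Real.exp (-lam * max u 0) := by
        apply Real.exp_le_exp.2
        nlinarith [mul_le_mul_of_nonneg_left hmax hlam]
      exact mul_le_mul_of_nonneg_right this (hf0 u)
    calc Real.exp (-lam * s) * ((1/τ) * ∫ u in (s - τ)..s, f u)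
        = (1/τ) * ∫ u in (s - τ)..s, Real.exp (-lam * s) * f u := by
          rw [intervalIntegral.integral_const_mul]; ring
      _ ≤ (1/τ) * ∫ u in (s - τ)..s, h u :=
          mul_le_mul_of_nonneg_left hmono (by positivity)
  -- pointwise bound on M
  have hMb : ∀ s, ‖M s‖ ≤ ‖x s - y s‖ + k * g s := by
    intro s
    rw [hM s]
    refine (norm_add_le _ _).trans (add_le_add_right ?_ _)
    have hsymm : rho2 τ (pathSegment τ y hy s) (pathSegment τ x hx s) = g s := by
      simp only [hgdef, rho2, norm_sub_rev]
    calc ‖G (pathSegment τ y hy s) - G (pathSegment τ x hx s)‖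
        ≤ k * rho2 τ (pathSegment τ y hy s) (pathSegment τ x hx s) := hG _ _
      _ = k * g s := by rw [hsymm]
  have pointwise : ∀ s ∈ Set.Icc (0:ℝ) t,
      Real.exp (-lam * s) * ‖M s‖ ^ 2
        ≤ (1 + k) * (Real.exp (-lam * s) * f s) + ((1 + k) * k * (1 / τ)) * W s := by
    intro s hs
    have hM2 : ‖M s‖ ^ 2 ≤ (1 + k) * (f s + k * (g s) ^ 2) := by
      have hfa : f s = ‖x s - y s‖ ^ 2 := rfl
      rw [hfa]
      have h1 : ‖M s‖ ^ 2 ≤ (‖x s - y s‖ + k * g s) ^ 2 := by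
        nlinarith [hMb s, norm_nonneg (M s), norm_nonneg (x s - y s), hg_nn s,
          mul_nonneg hk0 (hg_nn s)]
      nlinarith [sq_nonneg (‖x s - y s‖ - g s), hk0]
    have hMe := mul_le_mul_of_nonneg_left hM2 (Real.exp_nonneg (-lam * s))
    have hs1 := step1 s hs
    have hc : (0:ℝ) ≤ (1 + k) * k := mul_nonneg (by linarith) hk0
    have hs1' := mul_le_mul_of_nonneg_left hs1 hc
    nlinarith [hMe, hs1']
  -- integrate
  have hRHS_cont : Continuous (fun s =>
      (1 + k) * (Real.exp (-lam * s) * f s) + ((1 + k) * k * (1 / τ)) * W s) := by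
    apply Continuous.add
    · exact continuous_const.mul ((Real.continuous_exp.comp (by fun_prop)).mul hf_cont)
    · exact continuous_const.mul hW_cont
  have main : (∫ s in Set.Icc (0:ℝ) t, Real.exp (-lam * s) * ‖M s‖ ^ 2)
      ≤ ∫ s in Set.Icc (0:ℝ) t,
          ((1 + k) * (Real.exp (-lam * s) * f s) + ((1 + k) * k * (1 / τ)) * W s) := by
    apply integral_mono_of_nonneg
    · exact ae_of_all _ (fun s => by positivity)
    · exact hRHS_cont.integrableOn_Icc
    · exact (ae_restrict_iff' measurableSet_Icc).2 (ae_of_all _ pointwise)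
  have hsplit : (∫ s in Set.Icc (0:ℝ) t,
        ((1 + k) * (Real.exp (-lam * s) * f s) + ((1 + k) * k * (1 / τ)) * W s))
      = (1 + k) * (∫ s in Set.Icc (0:ℝ) t, Real.exp (-lam * s) * f s)
        + ((1 + k) * k * (1 / τ)) * ∫ s in Set.Icc (0:ℝ) t, W s := by
    rw [integral_add]
    · rw [integral_const_mul, integral_const_mul]
    · exact (continuous_const.mul ((Real.continuous_exp.comp (by fun_prop)).mul hf_cont)).integrableOn_Icc
    · exact (continuous_const.mul hW_cont).integrableOn_Icc
  -- bound ∫ W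
  have hWle : (∫ s in Set.Icc (0:ℝ) t, W s)
      ≤ τ * ((∫ u in (-τ)..(0:ℝ), f u) + ∫ u in (0:ℝ)..t, Real.exp (-lam * u) * f u) := by
    have e1 : (∫ s in Set.Icc (0:ℝ) t, W s) = ∫ s in (0:ℝ)..t, W s := by
      rw [intervalIntegral.integral_of_le ht.le, ← integral_Icc_eq_integral_Ioc]
    have e2 : (∫ s in (0:ℝ)..t, W s)
        = ∫ s in (0:ℝ)..t, ∫ u in (s - τ)..s, Real.exp (-lam * max u 0) * f u :=
      intervalIntegral.integral_congr (fun s _ => hW_eq s)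
    rw [e1, e2]
    exact shift_est τ lam t f hf_cont hf0 hτ hlam ht
  -- identify pieces
  set g0sq := (rho2 τ (pathSegment τ x hx 0) (pathSegment τ y hy 0)) ^ 2 with hg0
  have hi0 : (∫ u in (-τ)..(0:ℝ), f u) = τ * g0sq := by
    have := rho2_sq τ hτ x y hx hy 0
    rw [hg0, this]
    have h00 : (0:ℝ) - τ = -τ := by ring
    rw [h00]
    field_simp
    rfl
  set I := ∫ s in Set.Icc (0:ℝ) t, Real.exp (-lam * s) * f s with hI
  have hIeq : (∫ u in (0:ℝ)..t, Real.exp (-lam * u) * f u) = I := by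
    rw [hI, intervalIntegral.integral_of_le ht.le, ← integral_Icc_eq_integral_Ioc]
  rw [hi0, hIeq] at hWle
  have hcJ : ((1 + k) * k * (1 / τ)) * (∫ s in Set.Icc (0:ℝ) t, W s)
      ≤ (1 + k) * k * (τ * g0sq + I) := by
    have hc' : (0:ℝ) ≤ (1 + k) * k * (1 / τ) := by positivity
    calc ((1 + k) * k * (1 / τ)) * (∫ s in Set.Icc (0:ℝ) t, W s)
        ≤ ((1 + k) * k * (1 / τ)) * (τ * (τ * g0sq + I)) :=
          mul_le_mul_of_nonneg_left hWle hc'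
      _ = (1 + k) * k * (τ * g0sq + I) := by field_simp
  calc (∫ s in Set.Icc (0:ℝ) t, Real.exp (-lam * s) * ‖M s‖ ^ 2)
      ≤ (1 + k) * I + ((1 + k) * k * (1 / τ)) * ∫ s in Set.Icc (0:ℝ) t, W s := by
        rw [← hsplit]; exact main
    _ ≤ (1 + k) * I + (1 + k) * k * (τ * g0sq + I) := by linarith
    _ = (1 + k) ^ 2 * I + (1 + k) * k * τ * g0sq := by ring
end

section
/- Under the hypotheses of the previous statement (k ∈ [0,1), |G(ξ)-G(η)| ≤ k ρ₂(ξ,η), M(s) = (x(s)-y(s)) + (G(y_s)-G(x_s))), one has ∫₀ᵗ e^{-λs} |x(s)-y(s)|² ds ≤ (1/(1-k)²) ∫₀ᵗ e^{-λs} |M(s)|² ds + (kτ/(1-k)) ρ₂(x₀, y₀)². -/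
open MeasureTheory

lemma comap_icc_univ (τ : ℝ) :
    (volume.comap (Subtype.val : Set.Icc (-τ) (0:ℝ) → ℝ)) Set.univ = volume (Set.Icc (-τ) (0:ℝ)) := by
  rw [MeasurableEmbedding.comap_apply (MeasurableEmbedding.subtype_coe measurableSet_Icc)]
  rw [Set.image_univ, Subtype.range_coe]

lemma rho2_sq_eq {d : ℕ} {τ : ℝ} (hτ : 0 < τ) (x y : ℝ → EuclideanSpace ℝ (Fin d))
    (hx : Continuous x) (hy : Continuous y) (s : ℝ) :
    rho2 τ (pathSegment τ x hx s) (pathSegment τ y hy s) ^ 2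
      = (1 / τ) * ∫ u in Set.Icc (-τ) (0:ℝ), ‖x (s + u) - y (s + u)‖ ^ 2 := by
  have h := integral_subtype_comap (μ := volume) (measurableSet_Icc : MeasurableSet (Set.Icc (-τ) (0:ℝ)))
    (fun u : ℝ => ‖x (s + u) - y (s + u)‖ ^ 2)
  rw [rho2]
  rw [show (∫ θ : Set.Icc (-τ) (0:ℝ), ‖(pathSegment τ x hx s) θ - (pathSegment τ y hy s) θ‖ ^ 2
        ∂(volume.comap Subtype.val))
      = ∫ u in Set.Icc (-τ) (0:ℝ), ‖x (s + u) - y (s + u)‖ ^ 2 from by rw [← h]; rfl]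
  rw [Real.sq_sqrt]
  exact mul_nonneg (by positivity) (setIntegral_nonneg measurableSet_Icc (fun u _ => by positivity))

lemma rho2_le_dist {d : ℕ} {τ : ℝ} (hτ : 0 < τ)
    (ξ η : C(Set.Icc (-τ) (0:ℝ), EuclideanSpace ℝ (Fin d))) :
    rho2 τ ξ η ≤ dist ξ η := by
  have hd : (0:ℝ) ≤ dist ξ η := dist_nonneg
  rw [rho2, ← Real.sqrt_sq hd]
  apply Real.sqrt_le_sqrt
  set μc := volume.comap (Subtype.val : Set.Icc (-τ) (0:ℝ) → ℝ) with hμc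
  have hμuniv : μc Set.univ = ENNReal.ofReal τ := by
    rw [hμc, comap_icc_univ, Real.volume_Icc]; norm_num
  haveI : IsFiniteMeasure μc := ⟨by rw [hμuniv]; exact ENNReal.ofReal_lt_top⟩
  have hbound : ∀ θ : Set.Icc (-τ) (0:ℝ), ‖‖ξ θ - η θ‖ ^ 2‖ ≤ dist ξ η ^ 2 := by
    intro θ
    rw [Real.norm_of_nonneg (by positivity)]
    have h1 : ‖ξ θ - η θ‖ ≤ dist ξ η := by
      rw [← dist_eq_norm]; exact ContinuousMap.dist_apply_le_dist θ
    exact pow_le_pow_left₀ (norm_nonneg _) h1 2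
  have hle : (∫ θ : Set.Icc (-τ) (0:ℝ), ‖ξ θ - η θ‖ ^ 2 ∂μc) ≤ dist ξ η ^ 2 * τ := by
    calc (∫ θ : Set.Icc (-τ) (0:ℝ), ‖ξ θ - η θ‖ ^ 2 ∂μc)
        ≤ ‖∫ θ : Set.Icc (-τ) (0:ℝ), ‖ξ θ - η θ‖ ^ 2 ∂μc‖ := le_abs_self _
      _ ≤ dist ξ η ^ 2 * (μc Set.univ).toReal :=
          norm_integral_le_of_norm_le_const (Filter.Eventually.of_forall hbound)
      _ = dist ξ η ^ 2 * τ := by rw [hμuniv, ENNReal.toReal_ofReal hτ.le]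
  calc (1 / τ) * (∫ θ : Set.Icc (-τ) (0:ℝ), ‖ξ θ - η θ‖ ^ 2 ∂μc)
      ≤ (1 / τ) * (dist ξ η ^ 2 * τ) := by
        apply mul_le_mul_of_nonneg_left hle (by positivity)
    _ = dist ξ η ^ 2 := by field_simp

set_option maxHeartbeats 1000000 in
theorem lemma30_3 (τ lam t : ℝ) (hτ : 0 < τ) (hlam : 0 ≤ lam) (ht : 0 < t) (d : ℕ)
    (k : ℝ) (hk0 : 0 ≤ k) (hk1 : k < 1)
    (G : C(Set.Icc (-τ) (0:ℝ), EuclideanSpace ℝ (Fin d)) → EuclideanSpace ℝ (Fin d))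
    (hG : ∀ ξ η, ‖G ξ - G η‖ ≤ k * rho2 τ ξ η)
    (x y : ℝ → EuclideanSpace ℝ (Fin d)) (hx : Continuous x) (hy : Continuous y)
    (M : ℝ → EuclideanSpace ℝ (Fin d))
    (hM : ∀ s, M s = (x s - y s) + (G (pathSegment τ y hy s) - G (pathSegment τ x hx s))) :
    (∫ s in Set.Icc (0:ℝ) t, Real.exp (-lam * s) * ‖x s - y s‖ ^ 2)
      ≤ (1 / (1 - k) ^ 2) * (∫ s in Set.Icc (0:ℝ) t, Real.exp (-lam * s) * ‖M s‖ ^ 2)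
        + (k * τ / (1 - k)) * (rho2 τ (pathSegment τ x hx 0) (pathSegment τ y hy 0)) ^ 2 := by
  have h1k : (0:ℝ) < 1 - k := by linarith
  -- abbreviations
  set I : ℝ := ∫ s in Set.Icc (0:ℝ) t, Real.exp (-lam * s) * ‖x s - y s‖ ^ 2 with hIdef
  set J : ℝ := ∫ s in Set.Icc (0:ℝ) t, Real.exp (-lam * s) * ‖M s‖ ^ 2 with hJdef
  set P : ℝ := (rho2 τ (pathSegment τ x hx 0) (pathSegment τ y hy 0)) ^ 2 with hPdef
  -- rho squared formula
  have hρsq : ∀ s : ℝ, (rho2 τ (pathSegment τ x hx s) (pathSegment τ y hy s)) ^ 2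
      = (1 / τ) * ∫ u in Set.Icc (-τ) (0:ℝ), ‖x (s + u) - y (s + u)‖ ^ 2 :=
    fun s => rho2_sq_eq hτ x y hx hy s
  have hρ0 : ∀ s : ℝ, 0 ≤ rho2 τ (pathSegment τ x hx s) (pathSegment τ y hy s) :=
    fun s => Real.sqrt_nonneg _
  -- continuity of M
  have hGc : Continuous G := by
    apply LipschitzWith.continuous (K := ⟨k, hk0⟩)
    apply LipschitzWith.of_dist_le_mul
    intro ξ η
    rw [dist_eq_norm]
    exact (hG ξ η).trans (mul_le_mul_of_nonneg_left (rho2_le_dist hτ ξ η) hk0)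
  have hpsc : ∀ (z : ℝ → EuclideanSpace ℝ (Fin d)) (hz : Continuous z),
      Continuous (fun s => pathSegment τ z hz s) := by
    intro z hz
    have hc : Continuous (fun p : ℝ × Set.Icc (-τ) (0:ℝ) => z (p.1 + (p.2 : ℝ))) :=
      hz.comp (continuous_fst.add (continuous_subtype_val.comp continuous_snd))
    have heq : (fun s => pathSegment τ z hz s)
        = ⇑(ContinuousMap.curry (ContinuousMap.mk _ hc)) := by
      funext s; ext θ; rfl
    rw [heq]; exact (ContinuousMap.curry _).continuous
  have hMc : Continuous M := by
    have hMe : M = fun s => (x s - y s) + (G (pathSegment τ y hy s) - G (pathSegment τ x hx s)) :=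
      funext hM
    rw [hMe]
    exact (hx.sub hy).add ((hGc.comp (hpsc y hy)).sub (hGc.comp (hpsc x hx)))
  -- the two-variable function
  set F : ℝ × ℝ → ℝ := fun p => Real.exp (-lam * p.1) * ‖x (p.1 + p.2) - y (p.1 + p.2)‖ ^ 2
    with hFdef
  have hFc : Continuous F := by
    rw [hFdef]
    apply Continuous.mul
    · exact Real.continuous_exp.comp (continuous_const.mul continuous_fst)
    · exact (((hx.comp (continuous_fst.add continuous_snd)).sub
        (hy.comp (continuous_fst.add continuous_snd))).norm).pow 2
  have hFint : Integrable F
      ((volume.restrict (Set.Icc (0:ℝ) t)).prod (volume.restrict (Set.Icc (-τ) (0:ℝ)))) := by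
    rw [Measure.prod_restrict]
    exact hFc.continuousOn.integrableOn_compact (isCompact_Icc.prod isCompact_Icc)
  have hInner1 : Integrable (fun s => ∫ u in Set.Icc (-τ) (0:ℝ), F (s, u))
      (volume.restrict (Set.Icc (0:ℝ) t)) := hFint.integral_prod_left
  have hInner2 : Integrable (fun u => ∫ s in Set.Icc (0:ℝ) t, F (s, u))
      (volume.restrict (Set.Icc (-τ) (0:ℝ))) := hFint.integral_prod_right
  -- representation of the weighted rho^2
  have hKrepr : ∀ s : ℝ, Real.exp (-lam * s)
        * (rho2 τ (pathSegment τ x hx s) (pathSegment τ y hy s)) ^ 2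
      = (1 / τ) * ∫ u in Set.Icc (-τ) (0:ℝ), F (s, u) := by
    intro s
    rw [hρsq s]
    rw [show Real.exp (-lam * s) * ((1 / τ) * ∫ u in Set.Icc (-τ) (0:ℝ), ‖x (s+u) - y (s+u)‖ ^ 2)
        = (1 / τ) * (Real.exp (-lam * s) * ∫ u in Set.Icc (-τ) (0:ℝ), ‖x (s+u) - y (s+u)‖ ^ 2)
        from by ring]
    congr 1
    rw [← integral_const_mul]
  have hKint : IntegrableOn
      (fun s => Real.exp (-lam * s)
        * (rho2 τ (pathSegment τ x hx s) (pathSegment τ y hy s)) ^ 2) (Set.Icc (0:ℝ) t) :=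
    (hInner1.const_mul (1 / τ)).congr (Filter.Eventually.of_forall fun s => (hKrepr s).symm)
  set K : ℝ := ∫ s in Set.Icc (0:ℝ) t, Real.exp (-lam * s)
      * (rho2 τ (pathSegment τ x hx s) (pathSegment τ y hy s)) ^ 2 with hKdef
  -- Step A
  have hMint : IntegrableOn (fun s => Real.exp (-lam * s) * ‖M s‖ ^ 2) (Set.Icc (0:ℝ) t) := by
    apply Continuous.integrableOn_Icc
    exact (Real.continuous_exp.comp (continuous_const.mul continuous_id)).mul
      ((hMc.norm).pow 2)
  have hIint : IntegrableOn (fun s => Real.exp (-lam * s) * ‖x s - y s‖ ^ 2)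
      (Set.Icc (0:ℝ) t) := by
    apply Continuous.integrableOn_Icc
    exact (Real.continuous_exp.comp (continuous_const.mul continuous_id)).mul
      (((hx.sub hy).norm).pow 2)
  have hptwise : ∀ s ∈ Set.Icc (0:ℝ) t, Real.exp (-lam * s) * ‖x s - y s‖ ^ 2
      ≤ (1 / (1 - k)) * (Real.exp (-lam * s) * ‖M s‖ ^ 2)
        + k * (Real.exp (-lam * s)
          * (rho2 τ (pathSegment τ x hx s) (pathSegment τ y hy s)) ^ 2) := by
    intro s _
    set r : ℝ := rho2 τ (pathSegment τ x hx s) (pathSegment τ y hy s) with hr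
    have hxy : ‖x s - y s‖ ≤ ‖M s‖ + k * r := by
      have h1 : x s - y s = M s + (G (pathSegment τ x hx s) - G (pathSegment τ y hy s)) := by
        rw [hM s]; abel
      calc ‖x s - y s‖
          ≤ ‖M s‖ + ‖G (pathSegment τ x hx s) - G (pathSegment τ y hy s)‖ := by
            rw [h1]; exact norm_add_le _ _
        _ ≤ ‖M s‖ + k * r := by
            have := hG (pathSegment τ x hx s) (pathSegment τ y hy s)
            linarith
    have key : ‖x s - y s‖ ^ 2 ≤ (1 / (1 - k)) * ‖M s‖ ^ 2 + k * r ^ 2 := by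
      have ha := norm_nonneg (x s - y s)
      have hm := norm_nonneg (M s)
      have hrn : (0:ℝ) ≤ r := hρ0 s
      have hsq : ‖x s - y s‖ ^ 2 ≤ (‖M s‖ + k * r) ^ 2 := by nlinarith
      have h3 : (1 - k) * ((‖M s‖ + k * r) ^ 2) ≤ ‖M s‖ ^ 2 + k * (1 - k) * r ^ 2 := by
        nlinarith [mul_nonneg hk0 (sq_nonneg (‖M s‖ - (1 - k) * r))]
      have h4 : (1 - k) * ‖x s - y s‖ ^ 2 ≤ ‖M s‖ ^ 2 + k * (1 - k) * r ^ 2 := by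
        nlinarith [mul_le_mul_of_nonneg_left hsq h1k.le]
      have h5 : (1 - k) * ((1 / (1 - k)) * ‖M s‖ ^ 2 + k * r ^ 2)
          = ‖M s‖ ^ 2 + k * (1 - k) * r ^ 2 := by field_simp
      have h6 : (1 - k) * ‖x s - y s‖ ^ 2
          ≤ (1 - k) * ((1 / (1 - k)) * ‖M s‖ ^ 2 + k * r ^ 2) := by rw [h5]; exact h4
      exact le_of_mul_le_mul_left h6 h1k
    have hexp : (0:ℝ) ≤ Real.exp (-lam * s) := (Real.exp_pos _).le
    calc Real.exp (-lam * s) * ‖x s - y s‖ ^ 2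
        ≤ Real.exp (-lam * s) * ((1 / (1 - k)) * ‖M s‖ ^ 2 + k * r ^ 2) :=
          mul_le_mul_of_nonneg_left key hexp
      _ = (1 / (1 - k)) * (Real.exp (-lam * s) * ‖M s‖ ^ 2)
          + k * (Real.exp (-lam * s) * r ^ 2) := by ring
  have hA : I ≤ (1 / (1 - k)) * J + k * K := by
    have h1 := setIntegral_mono_on hIint
      ((hMint.const_mul (1 / (1 - k))).add (hKint.const_mul k)) measurableSet_Icc hptwise
    simp only [Pi.add_apply] at h1
    rwa [integral_add (hMint.const_mul _) (hKint.const_mul _), integral_const_mul,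
      integral_const_mul] at h1
  -- Step B
  have hB : K ≤ τ * P + I := by
    have hK1 : K = (1 / τ) * ∫ s in Set.Icc (0:ℝ) t, ∫ u in Set.Icc (-τ) (0:ℝ), F (s, u) := by
      rw [hKdef, ← integral_const_mul]
      exact setIntegral_congr_fun measurableSet_Icc (fun s _ => hKrepr s)
    have hswap : (∫ s in Set.Icc (0:ℝ) t, ∫ u in Set.Icc (-τ) (0:ℝ), F (s, u))
        = ∫ u in Set.Icc (-τ) (0:ℝ), ∫ s in Set.Icc (0:ℝ) t, F (s, u) :=
      integral_integral_swap (f := fun s u => F (s, u)) hFint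
    have hinner : ∀ u ∈ Set.Icc (-τ) (0:ℝ),
        (∫ s in Set.Icc (0:ℝ) t, F (s, u)) ≤ τ * P + I := by
      intro u hu
      obtain ⟨hu1, hu2⟩ := hu
      set g : ℝ → ℝ := fun v => Real.exp (-lam * (v - u)) * ‖x v - y v‖ ^ 2 with hg
      have hgc : Continuous g := by
        rw [hg]
        exact (Real.continuous_exp.comp (continuous_const.mul
          (continuous_id.sub continuous_const))).mul (((hx.sub hy).norm).pow 2)
      have hgnn : ∀ v, 0 ≤ g v := fun v => by
        rw [hg]; positivity
      have hFg : ∀ s : ℝ, F (s, u) = g (s + u) := by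
        intro s
        rw [hFdef, hg]
        simp only [add_sub_cancel_right]
      have hτP : τ * P = ∫ v in Set.Ioc (-τ) (0:ℝ), ‖x v - y v‖ ^ 2 := by
        rw [hPdef, hρsq 0]
        rw [show (∫ u in Set.Icc (-τ) (0:ℝ), ‖x (0 + u) - y (0 + u)‖ ^ 2)
            = ∫ v in Set.Icc (-τ) (0:ℝ), ‖x v - y v‖ ^ 2 from by simp only [zero_add]]
        rw [integral_Icc_eq_integral_Ioc]
        field_simp
      have hIeq : I = ∫ v in Set.Ioc (0:ℝ) t, Real.exp (-lam * v) * ‖x v - y v‖ ^ 2 := by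
        rw [hIdef, integral_Icc_eq_integral_Ioc]
      calc (∫ s in Set.Icc (0:ℝ) t, F (s, u))
          = ∫ s in Set.Icc (0:ℝ) t, g (s + u) :=
            setIntegral_congr_fun measurableSet_Icc (fun s _ => hFg s)
        _ = ∫ s in (0:ℝ)..t, g (s + u) := by
            rw [intervalIntegral.integral_of_le ht.le, integral_Icc_eq_integral_Ioc]
        _ = ∫ v in (0 + u)..(t + u), g v := intervalIntegral.integral_comp_add_right g u
        _ = ∫ v in Set.Ioc u (t + u), g v := by
            rw [intervalIntegral.integral_of_le (by linarith), zero_add]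
        _ ≤ ∫ v in Set.Ioc u 0 ∪ Set.Ioc 0 t, g v := by
            apply setIntegral_mono_set
            · exact (hgc.integrableOn_Ioc).union hgc.integrableOn_Ioc
            · exact Filter.Eventually.of_forall (fun v => hgnn v)
            · apply HasSubset.Subset.eventuallyLE
              intro v hv
              rcases le_or_gt v 0 with h0 | h0
              · exact Or.inl ⟨hv.1, h0⟩
              · exact Or.inr ⟨h0, hv.2.trans (by linarith)⟩
        _ = (∫ v in Set.Ioc u 0, g v) + ∫ v in Set.Ioc 0 t, g v :=
            setIntegral_union (Set.Ioc_disjoint_Ioc_of_le le_rfl) measurableSet_Ioc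
              hgc.integrableOn_Ioc hgc.integrableOn_Ioc
        _ ≤ τ * P + I := by
            apply add_le_add
            · calc (∫ v in Set.Ioc u 0, g v)
                  ≤ ∫ v in Set.Ioc u 0, ‖x v - y v‖ ^ 2 := by
                    apply setIntegral_mono_on hgc.integrableOn_Ioc
                      (((hx.sub hy).norm.pow 2).integrableOn_Ioc) measurableSet_Ioc
                    intro v hv
                    rw [hg]
                    have h1 : Real.exp (-lam * (v - u)) ≤ 1 := by
                      rw [Real.exp_le_one_iff]
                      nlinarith [hv.1]
                    calc Real.exp (-lam * (v - u)) * ‖x v - y v‖ ^ 2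
                        ≤ 1 * ‖x v - y v‖ ^ 2 :=
                          mul_le_mul_of_nonneg_right h1 (by positivity)
                      _ = ‖x v - y v‖ ^ 2 := one_mul _
                _ ≤ ∫ v in Set.Ioc (-τ) (0:ℝ), ‖x v - y v‖ ^ 2 := by
                    apply setIntegral_mono_set (((hx.sub hy).norm.pow 2).integrableOn_Ioc)
                      (Filter.Eventually.of_forall (fun v => sq_nonneg _))
                    exact HasSubset.Subset.eventuallyLE (Set.Ioc_subset_Ioc_left hu1)
                _ = τ * P := hτP.symm
            · rw [hIeq]
              apply setIntegral_mono_on hgc.integrableOn_Ioc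
              · exact Continuous.integrableOn_Ioc
                  ((Real.continuous_exp.comp (continuous_const.mul continuous_id)).mul
                    (((hx.sub hy).norm).pow 2))
              · exact measurableSet_Ioc
              · intro v hv
                rw [hg]
                have h1 : Real.exp (-lam * (v - u)) ≤ Real.exp (-lam * v) := by
                  apply Real.exp_le_exp.mpr
                  nlinarith
                exact mul_le_mul_of_nonneg_right h1 (by positivity)
    have houter : (∫ u in Set.Icc (-τ) (0:ℝ), ∫ s in Set.Icc (0:ℝ) t, F (s, u))
        ≤ τ * (τ * P + I) := by
      calc (∫ u in Set.Icc (-τ) (0:ℝ), ∫ s in Set.Icc (0:ℝ) t, F (s, u))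
          ≤ ∫ _u in Set.Icc (-τ) (0:ℝ), (τ * P + I) := by
            apply setIntegral_mono_on hInner2
              (integrableOn_const measure_Icc_lt_top.ne) measurableSet_Icc hinner
        _ = (volume (Set.Icc (-τ) (0:ℝ))).toReal * (τ * P + I) := by
            rw [setIntegral_const]; rfl
        _ = τ * (τ * P + I) := by
            rw [Real.volume_Icc]
            norm_num [ENNReal.toReal_ofReal hτ.le]
    rw [hK1, hswap]
    calc (1 / τ) * (∫ u in Set.Icc (-τ) (0:ℝ), ∫ s in Set.Icc (0:ℝ) t, F (s, u))
        ≤ (1 / τ) * (τ * (τ * P + I)) :=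
          mul_le_mul_of_nonneg_left houter (by positivity)
      _ = τ * P + I := by field_simp
  -- combine
  have hfin : (1 - k) * I ≤ (1 / (1 - k)) * J + k * τ * P := by
    have hkB := mul_le_mul_of_nonneg_left hB hk0
    linarith
  have h2 := mul_le_mul_of_nonneg_left hfin (le_of_lt (one_div_pos.mpr h1k))
  have e1 : (1 / (1 - k)) * ((1 - k) * I) = I := by field_simp
  have e2 : (1 / (1 - k)) * ((1 / (1 - k)) * J + k * τ * P)
      = (1 / (1 - k) ^ 2) * J + (k * τ / (1 - k)) * P := by
    field_simp
  linarith [e1 ▸ e2 ▸ h2]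
end
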